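/- Let v ∈ {0,1}^n have some coordinate equal to 1, and let v' ∈ ℝ^n satisfy ‖v' − v‖_∞ < 1/(2n). Then the maximum coordinate of S(v') is attained uniquely at index low(v), i.e., maxidx(S(v')) = low(v). -/

import Mathlib

/-- If `v ∈ {0,1}^n` has some coordinate 1, `k = low v`, and
`v' ∈ ℝ^n` satisfies `‖v' - v‖_∞ < 1/(2n)`, then `S v'` attains its maximum
uniquely at index `k`, i.e. `maxidx (S v') = low v`. -/
theorem stmt1 (n : ℕ) (hn : 1 ≤ n) (v : Fin n → ℝ) (v' : Fin n → ℝ)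
    (hbin : ∀ i, v i = 0 ∨ v i = 1)
    (k : Fin n) (hk1 : v k = 1) (hkmax : ∀ i : Fin n, k < i → v i = 0)
    (hclose : ∀ i, |v' i - v i| < 1 / (2 * n)) :
    ∀ j : Fin n, j ≠ k →
      v' j + (j : ℕ) / (n : ℝ) < v' k + (k : ℕ) / (n : ℝ) := by
  intro j hj
  have hn' : (0 : ℝ) < n := by exact_mod_cast Nat.lt_of_lt_of_le Nat.zero_lt_one hn
  have habsj := abs_lt.mp (hclose j)
  have habsk := abs_lt.mp (hclose k)
  have hB : 1 / (2 * (n : ℝ)) + 1 / (2 * (n : ℝ)) = 1 / n := by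
    field_simp
    norm_num
  rcases lt_or_gt_of_ne hj with h | h
  · -- j < k
    have hvj : v j ≤ 1 := by rcases hbin j with h' | h' <;> simp [h']
    have hjk : ((j : ℕ) : ℝ) + 1 ≤ ((k : ℕ) : ℝ) := by
      have : (j : ℕ) + 1 ≤ (k : ℕ) := h
      exact_mod_cast this
    have hA : ((j : ℕ) : ℝ) / n + 1 / n ≤ ((k : ℕ) : ℝ) / n := by
      rw [← add_div]
      gcongr
    linarith [habsj.2, habsk.1, hk1]
  · -- k < j
    have hvj : v j = 0 := hkmax j h
    have hkj : ((k : ℕ) : ℝ) + 1 ≤ ((j : ℕ) : ℝ) := by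
      have : (k : ℕ) + 1 ≤ (j : ℕ) := h
      exact_mod_cast this
    have hj1 : ((j : ℕ) : ℝ) ≤ (n : ℝ) - 1 := by
      have : (j : ℕ) + 1 ≤ n := j.isLt
      have := (Nat.cast_le (α := ℝ)).mpr this
      push_cast at this
      linarith
    have hD : ((j : ℕ) : ℝ) / n ≤ ((k : ℕ) : ℝ) / n + 1 - 1 / n := by
      have h1 : ((j : ℕ) : ℝ) / n ≤ (((k : ℕ) : ℝ) + ((n : ℝ) - 1)) / n := by
        gcongr
        have hk0 : (0 : ℝ) ≤ ((k : ℕ) : ℝ) := Nat.cast_nonneg _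
        linarith
      have h2 : (((k : ℕ) : ℝ) + ((n : ℝ) - 1)) / n = ((k : ℕ) : ℝ) / n + 1 - 1 / n := by
        field_simp
        ring
      linarith [h1, h2.ge, h2.le]
    linarith [habsj.2, habsk.1, hvj, hk1]
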